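/- Let V be a two-dimensional real vector space with a symmetric bilinear form B such that B(y,y) < 0 for some y ∈ V. If u, w ∈ V are linearly independent with B(u,u) ≥ 0 and B(w,w) ≥ 0, then B(u,w)² > B(u,u)·B(w,w). In particular, if v ∈ V satisfies B(v,v) > 0 and u ≠ 0 satisfies B(u,u) = 0, then B(v,u) ≠ 0. -/

import Mathlib

/-- Reverse Cauchy–Schwarz on a two-dimensional real vector space with a symmetric
bilinear form taking a negative value: linearly independent vectors of nonnegative square
satisfy `B(u,w)² > B(u,u)·B(w,w)`; in particular a vector of positive square pairs
nontrivially with every nonzero isotropic vector. -/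
theorem stmt_4 (V : Type*) [AddCommGroup V] [Module ℝ V]
    (hdim : Module.finrank ℝ V = 2)
    (B : V →ₗ[ℝ] V →ₗ[ℝ] ℝ) (hsymm : ∀ x y : V, B x y = B y x)
    (hneg : ∃ y : V, B y y < 0) :
    (∀ u w : V, LinearIndependent ℝ ![u, w] → 0 ≤ B u u → 0 ≤ B w w →
      B u u * B w w < (B u w) ^ 2) ∧
    (∀ v u : V, 0 < B v v → u ≠ 0 → B u u = 0 → B v u ≠ 0) := by
  obtain ⟨y, hy⟩ := hneg
  have key : ∀ u w : V, LinearIndependent ℝ ![u, w] → 0 ≤ B u u → 0 ≤ B w w →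
      B u u * B w w < (B u w) ^ 2 := by
    intro u w hli hu hw
    by_contra hcon
    push_neg at hcon
    have hcard : Fintype.card (Fin 2) = Module.finrank ℝ V := by simp [hdim]
    let b : Module.Basis (Fin 2) ℝ V := basisOfLinearIndependentOfCardEqFinrank hli hcard
    have hb0 : b 0 = u := by
      simp [b, coe_basisOfLinearIndependentOfCardEqFinrank]
    have hb1 : b 1 = w := by
      simp [b, coe_basisOfLinearIndependentOfCardEqFinrank]
    set a := b.repr y 0 with ha
    set c := b.repr y 1 with hc
    have hy2 : y = a • u + c • w := by
      have := b.sum_repr y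
      rw [Fin.sum_univ_two, hb0, hb1] at this
      exact this.symm
    have hyy : B y y = a ^ 2 * B u u + 2 * (a * c) * B u w + c ^ 2 * B w w := by
      rw [hy2]
      simp only [map_add, map_smul, LinearMap.add_apply, LinearMap.smul_apply, smul_eq_mul]
      rw [hsymm w u]; ring
    rcases hu.eq_or_lt with hBuu | hBuu
    · have hBuw : B u w = 0 := by nlinarith [sq_nonneg (B u w)]
      rw [hyy, hBuw, ← hBuu] at hy
      nlinarith [mul_nonneg (sq_nonneg c) hw]
    · nlinarith [sq_nonneg (a * B u u + c * B u w),
        mul_nonneg (sq_nonneg c) (sub_nonneg.2 hcon)]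
  refine ⟨key, ?_⟩
  intro v u hv hu0 huu hvu
  by_cases hli : LinearIndependent ℝ ![v, u]
  · have h := key v u hli hv.le huu.ge
    rw [huu, hvu] at h
    simp at h
  · rw [LinearIndependent.pair_iff] at hli
    push_neg at hli
    obtain ⟨s, t, hst, hne⟩ := hli
    have huv : B u v = 0 := by rw [hsymm]; exact hvu
    have h1 : B (s • v + t • u) v = 0 := by rw [hst]; simp
    simp only [map_add, map_smul, LinearMap.add_apply, LinearMap.smul_apply,
      smul_eq_mul, huv, mul_zero, add_zero] at h1
    have hs : s = 0 := by
      rcases mul_eq_zero.1 h1 with h | h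
      · exact h
      · exact absurd h hv.ne'
    have ht := hne hs
    rw [hs, zero_smul, zero_add] at hst
    rcases smul_eq_zero.1 hst with h | h
    · exact ht h
    · exact hu0 h
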